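/- Let Γ be a connected k-regular graph whose distinct adjacency eigenvalues are exactly {k, k/2, 0, -k/2}, and let U be the Grover walk time evolution matrix of Γ. Then U¹² = I, i.e., Γ is periodic with period dividing 12. -/

import Mathlib

/-- The set of symmetric arcs of a graph. -/
abbrev arcSet {V : Type*} (G : SimpleGraph V) : Type _ := {p : V × V // G.Adj p.1 p.2}

/-- The boundary matrix `d` of the Grover walk: `d_{x,a} = (deg x)^{-1/2} δ_{x,t(a)}`. -/
noncomputable def bdryMatrix {V : Type*} [Fintype V] [DecidableEq V]
    (G : SimpleGraph V) [DecidableRel G.Adj] : Matrix V (arcSet G) ℝ :=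
  fun x a => if x = a.1.2 then (Real.sqrt (G.degree x))⁻¹ else 0

/-- The shift (arc-reversal) matrix `R`: `R_{a,b} = δ_{a,b⁻¹}`. -/
def shiftMatrix {V : Type*} [Fintype V] [DecidableEq V]
    (G : SimpleGraph V) [DecidableRel G.Adj] : Matrix (arcSet G) (arcSet G) ℝ :=
  fun a b => if a.1 = (b.1.2, b.1.1) then 1 else 0

/-- The Grover walk time evolution matrix `U = R(2d*d - I)`. -/
noncomputable def groverMatrix {V : Type*} [Fintype V] [DecidableEq V]
    (G : SimpleGraph V) [DecidableRel G.Adj] : Matrix (arcSet G) (arcSet G) ℝ :=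
  shiftMatrix G * (2 • ((bdryMatrix G).transpose * bdryMatrix G) - 1)

open Matrix
section Core
variable {ι κ : Type*} [Fintype ι] [Fintype κ] [DecidableEq ι] [DecidableEq κ]

lemma matrix_eq_zero_of_mulVec {M : Matrix ι κ ℝ} (h : ∀ w, M *ᵥ w = 0) : M = 0 := by
  ext a b
  have := congrFun (h (Pi.single b 1)) a
  simpa using this

lemma real_conjTranspose_eq_transpose (M : Matrix ι κ ℝ) : Mᴴ = Mᵀ := by
  ext i j; simp [Matrix.conjTranspose_apply]

lemma core12 (u : Matrix ι ι ℝ) (e₁ e₂ : Matrix ι κ ℝ) (x : Matrix κ κ ℝ)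
    (h1 : u * e₁ = e₂) (h2 : u * e₂ = e₂ * x - e₁)
    (hq : x ^ 4 = x ^ 3 * 2 + x ^ 2 - x * 2)
    (hr : (e₂ - e₁) * (x ^ 3 - x) = 0) :
    u ^ 12 * e₁ = e₁ ∧ u ^ 12 * e₂ = e₂ := by
  have step : ∀ p q : Matrix κ κ ℝ,
      u * (e₁ * p + e₂ * q) = e₁ * (-q) + e₂ * (p + x * q) := by
    intro p q
    rw [Matrix.mul_add, ← Matrix.mul_assoc, ← Matrix.mul_assoc, h1, h2]
    rw [Matrix.sub_mul, Matrix.mul_add, Matrix.mul_neg, Matrix.mul_assoc]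
    abel
  have spow : ∀ n : ℕ, u ^ (n + 1) * e₁ = u * (u ^ n * e₁) := by
    intro n; rw [← Matrix.mul_assoc, ← pow_succ']
  have H2 : u ^ 2 * e₁ = e₁ * (-1 : Matrix κ κ ℝ) + e₂ * x := by
    have h' : u ^ 2 * e₁ = u * (u ^ 1 * e₁) := spow 1
    rw [h', pow_one, h1, h2, Matrix.mul_neg, Matrix.mul_one]
    abel
  have H3 : u ^ 3 * e₁ = e₁ * (-x) + e₂ * (-1 + x * x) := by
    rw [spow 2, H2, step]
  have H4 : u ^ 4 * e₁ = e₁ * (-(-1 + x * x)) + e₂ * (-x + x * (-1 + x * x)) := by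
    rw [spow 3, H3, step]
  have H5 : u ^ 5 * e₁ = e₁ * (-(-x + x * (-1 + x * x)))
      + e₂ * (x ^ 3 * 2 - x ^ 2 * 2 - x * 2 + 1) := by
    rw [spow 4, H4, step]
    rw [show (-(-1 + x * x)) + x * (-x + x * (-1 + x * x)) =
        (x ^ 3 * 2 - x ^ 2 * 2 - x * 2 + 1) + (x ^ 4 - (x ^ 3 * 2 + x ^ 2 - x * 2)) * 1 from by
      noncomm_ring, hq]
    noncomm_ring
  have H6 : u ^ 6 * e₁ = e₁ * (-(x ^ 3 * 2 - x ^ 2 * 2 - x * 2 + 1))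
      + e₂ * (x ^ 3 - x) := by
    rw [spow 5, H5, step]
    rw [show (-(-x + x * (-1 + x * x))) + x * (x ^ 3 * 2 - x ^ 2 * 2 - x * 2 + 1) =
        (x ^ 3 - x) + (x ^ 4 - (x ^ 3 * 2 + x ^ 2 - x * 2)) * 2 from by
      noncomm_ring, hq]
    noncomm_ring
  have H7 : u ^ 7 * e₁ = e₁ * (-(x ^ 3 - x)) + e₂ * (x ^ 2 * 2 - 1) := by
    rw [spow 6, H6, step]
    rw [show (-(x ^ 3 * 2 - x ^ 2 * 2 - x * 2 + 1)) + x * (x ^ 3 - x) =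
        (x ^ 2 * 2 - 1) + (x ^ 4 - (x ^ 3 * 2 + x ^ 2 - x * 2)) * 1 from by
      noncomm_ring, hq]
    noncomm_ring
  have H8 : u ^ 8 * e₁ = e₁ * (-(x ^ 2 * 2 - 1)) + e₂ * (x ^ 3) := by
    rw [spow 7, H7, step]
    rw [show (-(x ^ 3 - x)) + x * (x ^ 2 * 2 - 1) = (x ^ 3 : Matrix κ κ ℝ) from by
      noncomm_ring]
  have H9 : u ^ 9 * e₁ = e₁ * (-(x ^ 3 : Matrix κ κ ℝ))
      + e₂ * (x ^ 3 * 2 - x ^ 2 - x * 2 + 1) := by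
    rw [spow 8, H8, step]
    rw [show (-(x ^ 2 * 2 - 1)) + x * x ^ 3 =
        (x ^ 3 * 2 - x ^ 2 - x * 2 + 1) + (x ^ 4 - (x ^ 3 * 2 + x ^ 2 - x * 2)) * 1 from by
      noncomm_ring, hq]
    noncomm_ring
  have H10 : u ^ 10 * e₁ = e₁ * (-(x ^ 3 * 2 - x ^ 2 - x * 2 + 1))
      + e₂ * (x ^ 3 * 2 - x * 3) := by
    rw [spow 9, H9, step]
    rw [show (-(x ^ 3 : Matrix κ κ ℝ)) + x * (x ^ 3 * 2 - x ^ 2 - x * 2 + 1) =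
        (x ^ 3 * 2 - x * 3) + (x ^ 4 - (x ^ 3 * 2 + x ^ 2 - x * 2)) * 2 from by
      noncomm_ring, hq]
    noncomm_ring
  have H11 : u ^ 11 * e₁ = e₁ * (-(x ^ 3 * 2 - x * 3)) + e₂ * (x ^ 3 * 2 - x * 2 - 1) := by
    rw [spow 10, H10, step]
    rw [show (-(x ^ 3 * 2 - x ^ 2 - x * 2 + 1)) + x * (x ^ 3 * 2 - x * 3) =
        (x ^ 3 * 2 - x * 2 - 1) + (x ^ 4 - (x ^ 3 * 2 + x ^ 2 - x * 2)) * 2 from by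
      noncomm_ring, hq]
    noncomm_ring
  have H12 : u ^ 12 * e₁ = e₁ * (-(x ^ 3 * 2 - x * 2 - 1)) + e₂ * (x ^ 3 * 2 - x * 2) := by
    rw [spow 11, H11, step]
    rw [show (-(x ^ 3 * 2 - x * 3)) + x * (x ^ 3 * 2 - x * 2 - 1) =
        (x ^ 3 * 2 - x * 2) + (x ^ 4 - (x ^ 3 * 2 + x ^ 2 - x * 2)) * 2 from by
      noncomm_ring, hq]
    noncomm_ring
  have key1 : u ^ 12 * e₁ = e₁ := by
    rw [H12,
      show -(x ^ 3 * 2 - x * 2 - 1) = 1 - (x ^ 3 - x) * 2 from by noncomm_ring,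
      show x ^ 3 * 2 - x * 2 = (x ^ 3 - x) * 2 from by noncomm_ring]
    have h2' : e₂ * ((x ^ 3 - x) * 2) = e₁ * ((x ^ 3 - x) * 2) := by
      have := hr
      rw [Matrix.sub_mul, sub_eq_zero] at this
      rw [← Matrix.mul_assoc, ← Matrix.mul_assoc, this]
    rw [h2', Matrix.mul_sub, Matrix.mul_one]
    abel
  refine ⟨key1, ?_⟩
  calc u ^ 12 * e₂ = u ^ 12 * (u * e₁) := by rw [h1]
    _ = u ^ 12 * u * e₁ := by rw [Matrix.mul_assoc]
    _ = u ^ (12 + 1) * e₁ := by rw [← pow_succ]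
    _ = u * u ^ 12 * e₁ := by rw [pow_succ']
    _ = u * (u ^ 12 * e₁) := by rw [Matrix.mul_assoc]
    _ = u * e₁ := by rw [key1]
    _ = e₂ := h1


end Core

set_option linter.unusedSectionVars false

section Graph
open Matrix
variable {V : Type*} [Fintype V] [DecidableEq V] (G : SimpleGraph V) [DecidableRel G.Adj]

/-- Arc reversal. -/
def revArc (a : arcSet G) : arcSet G := ⟨(a.1.2, a.1.1), a.2.symm⟩

lemma shift_mul_apply {κ : Type*} (M : Matrix (arcSet G) κ ℝ) (a : arcSet G) (c : κ) :
    (shiftMatrix G * M) a c = M (revArc G a) c := by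
  have hiff : ∀ b : arcSet G, a.1 = (b.1.2, b.1.1) ↔ b = revArc G a := by
    intro b
    constructor
    · intro h
      have h1 : a.1.1 = b.1.2 := congrArg Prod.fst h
      have h2 : a.1.2 = b.1.1 := congrArg Prod.snd h
      exact Subtype.ext (Prod.ext_iff.mpr ⟨h2.symm, h1.symm⟩)
    · rintro rfl; rfl
  rw [Matrix.mul_apply]
  calc ∑ b, shiftMatrix G a b * M b c
      = ∑ b, if b = revArc G a then M b c else 0 := by
        refine Finset.sum_congr rfl fun b _ => ?_
        rw [shiftMatrix]
        by_cases h : b = revArc G a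
        · rw [if_pos ((hiff b).mpr h), if_pos h, one_mul]
        · rw [if_neg (fun hc => h ((hiff b).mp hc)), if_neg h, zero_mul]
    _ = M (revArc G a) c := by simp

lemma shift_mul_shift : shiftMatrix G * shiftMatrix G = 1 := by
  ext a b
  rw [shift_mul_apply]
  have : (revArc G a).1 = (b.1.2, b.1.1) ↔ a = b := by
    constructor
    · intro h
      have h1 : a.1.2 = b.1.2 := congrArg Prod.fst h
      have h2 : a.1.1 = b.1.1 := congrArg Prod.snd h
      exact Subtype.ext (Prod.ext_iff.mpr ⟨h2, h1⟩)
    · rintro rfl; rfl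
  rw [shiftMatrix, Matrix.one_apply]
  by_cases h : a = b
  · rw [if_pos (this.mpr h), if_pos h]
  · rw [if_neg (fun hc => h (this.mp hc)), if_neg h]


variable {k : ℕ}

lemma card_arcs_head (hreg : G.IsRegularOfDegree k) (x : V) :
    (Finset.univ.filter fun a : arcSet G => x = a.1.2).card = k := by
  rw [← hreg x, ← G.card_neighborFinset_eq_degree x]
  apply Finset.card_bij (fun (a : arcSet G) _ => a.1.1)
  · intro a ha
    simp only [Finset.mem_filter, Finset.mem_univ, true_and] at ha
    rw [SimpleGraph.mem_neighborFinset]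
    subst ha
    exact a.2.symm
  · intro a ha b hb hab
    simp only [Finset.mem_filter, Finset.mem_univ, true_and] at ha hb
    exact Subtype.ext (Prod.ext_iff.mpr ⟨hab, ha ▸ hb ▸ rfl⟩)
  · intro y hy
    rw [SimpleGraph.mem_neighborFinset] at hy
    exact ⟨⟨(y, x), hy.symm⟩, by simp, rfl⟩

lemma bdry_mul_bdryT (hreg : G.IsRegularOfDegree k) (hk : 0 < k) :
    bdryMatrix G * (bdryMatrix G)ᵀ = 1 := by
  ext x y
  rw [Matrix.mul_apply, Matrix.one_apply]
  by_cases hxy : x = y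
  · subst hxy
    have hdeg : (G.degree x : ℝ) = (k : ℝ) := by rw [hreg x]
    have hs : (Real.sqrt (G.degree x))⁻¹ * (Real.sqrt (G.degree x))⁻¹ = (k : ℝ)⁻¹ := by
      rw [← mul_inv, Real.mul_self_sqrt (by positivity), hdeg]
    calc ∑ a : arcSet G, bdryMatrix G x a * (bdryMatrix G)ᵀ a x
        = ∑ a : arcSet G, if x = a.1.2 then (k:ℝ)⁻¹ else 0 := by
          refine Finset.sum_congr rfl fun a _ => ?_
          rw [Matrix.transpose_apply, bdryMatrix]
          by_cases h : x = a.1.2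
          · rw [if_pos h, if_pos h, hs]
          · rw [if_neg h, if_neg h, mul_zero]
      _ = ∑ _a ∈ Finset.univ.filter (fun a : arcSet G => x = a.1.2), (k:ℝ)⁻¹ :=
          (Finset.sum_filter _ _).symm
      _ = (Finset.univ.filter fun a : arcSet G => x = a.1.2).card • (k:ℝ)⁻¹ :=
          Finset.sum_const _
      _ = 1 := by
          rw [card_arcs_head G hreg, nsmul_eq_mul, mul_inv_cancel₀]
          exact_mod_cast hk.ne'
    rw [if_pos rfl]
  · rw [if_neg hxy]
    refine Finset.sum_eq_zero fun a _ => ?_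
    simp only [Matrix.transpose_apply, bdryMatrix]
    by_cases h1 : x = a.1.2
    · by_cases h2 : y = a.1.2
      · exact absurd (h1.trans h2.symm) hxy
      · rw [if_neg h2, mul_zero]
    · rw [if_neg h1, zero_mul]


lemma shift_bdryT_apply (a : arcSet G) (y : V) :
    (shiftMatrix G * (bdryMatrix G)ᵀ) a y
      = if y = a.1.1 then (Real.sqrt (G.degree y))⁻¹ else 0 := by
  rw [shift_mul_apply, Matrix.transpose_apply]
  rfl

lemma disc_eq (hreg : G.IsRegularOfDegree k) (hk : 0 < k) :
    bdryMatrix G * (shiftMatrix G * (bdryMatrix G)ᵀ) = (k:ℝ)⁻¹ • G.adjMatrix ℝ := by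
  ext x y
  rw [Matrix.mul_apply]
  have hterm : ∀ a : arcSet G, bdryMatrix G x a * (shiftMatrix G * (bdryMatrix G)ᵀ) a y
      = if a.1 = (y, x) then (k:ℝ)⁻¹ else 0 := by
    intro a
    rw [shift_bdryT_apply, bdryMatrix]
    by_cases h1 : x = a.1.2
    · by_cases h2 : y = a.1.1
      · rw [if_pos h1, if_pos h2, if_pos (Prod.ext_iff.mpr ⟨h2.symm, h1.symm⟩)]
        rw [hreg x, hreg y, ← mul_inv, Real.mul_self_sqrt (by positivity)]
      · rw [if_pos h1, if_neg h2, mul_zero,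
          if_neg (fun hc => h2 (congrArg Prod.fst hc).symm)]
    · rw [if_neg h1, zero_mul, if_neg (fun hc => h1 (congrArg Prod.snd hc).symm)]
  rw [Finset.sum_congr rfl (fun a _ => hterm a)]
  by_cases hadj : G.Adj y x
  · have : ∀ a : arcSet G, (a.1 = (y, x)) ↔ (a = ⟨(y, x), hadj⟩) :=
      fun a => ⟨fun h => Subtype.ext h, fun h => congrArg Subtype.val h⟩
    calc ∑ a : arcSet G, (if a.1 = (y, x) then (k:ℝ)⁻¹ else 0)
        = ∑ a : arcSet G, (if a = (⟨(y, x), hadj⟩ : arcSet G) then (k:ℝ)⁻¹ else 0) := by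
          refine Finset.sum_congr rfl fun a _ => ?_
          by_cases h : a.1 = (y, x)
          · rw [if_pos h, if_pos ((this a).mp h)]
          · rw [if_neg h, if_neg (fun hc => h ((this a).mpr hc))]
      _ = (k:ℝ)⁻¹ := by simp
      _ = ((k:ℝ)⁻¹ • G.adjMatrix ℝ) x y := by
          rw [Matrix.smul_apply, SimpleGraph.adjMatrix_apply, if_pos hadj.symm, smul_eq_mul, mul_one]
  · calc ∑ a : arcSet G, (if a.1 = (y, x) then (k:ℝ)⁻¹ else 0)
        = 0 := by
          refine Finset.sum_eq_zero fun a _ => ?_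
          refine if_neg (fun hc => hadj ?_)
          have := a.2
          rw [hc] at this
          exact this
      _ = ((k:ℝ)⁻¹ • G.adjMatrix ℝ) x y := by
          rw [Matrix.smul_apply, SimpleGraph.adjMatrix_apply,
            if_neg (fun hc => hadj hc.symm), smul_eq_mul, mul_zero]


lemma eigen_const (hconn : G.Connected) (hreg : G.IsRegularOfDegree k) {v : V → ℝ}
    (hv : G.adjMatrix ℝ *ᵥ v = (k:ℝ) • v) (x y : V) : v x = v y := by
  have : Nonempty V := hconn.nonempty
  obtain ⟨x₀, hx₀⟩ := Finite.exists_max v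
  have step : ∀ a b : V, G.Adj a b → v a = v x₀ → v b = v x₀ := by
    intro a b hab ha
    have hsum := congrFun hv a
    rw [SimpleGraph.adjMatrix_mulVec_apply] at hsum
    have hcard : (G.neighborFinset a).card = k := by
      rw [G.card_neighborFinset_eq_degree]; exact hreg a
    have heq : ∑ u ∈ G.neighborFinset a, v u = ∑ _u ∈ G.neighborFinset a, v x₀ := by
      rw [hsum, Finset.sum_const, hcard, nsmul_eq_mul, Pi.smul_apply, smul_eq_mul, ha]
    have := (Finset.sum_eq_sum_iff_of_le (fun i _ => hx₀ i)).mp heq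
    exact this b (by rwa [SimpleGraph.mem_neighborFinset])
  have main : ∀ {a b : V} (w : G.Walk a b), v a = v x₀ → v b = v x₀ := by
    intro a b w
    induction w with
    | nil => exact id
    | cons h p ih => exact fun ha => ih (step _ _ h ha)
  have hx : v x = v x₀ := (hconn.preconnected x₀ x).elim fun w => main w rfl
  have hy : v y = v x₀ := (hconn.preconnected x₀ y).elim fun w => main w rfl
  rw [hx, hy]

lemma Ediff_mulVec_const (hreg : G.IsRegularOfDegree k) {v : V → ℝ}
    (hcv : ∀ x y, v x = v y) :
    ((shiftMatrix G * (bdryMatrix G)ᵀ) - (bdryMatrix G)ᵀ) *ᵥ v = 0 := by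
  ext a
  rw [Matrix.sub_mulVec]
  have h1 : ((bdryMatrix G)ᵀ *ᵥ v) a = (Real.sqrt k)⁻¹ * v a.1.2 := by
    rw [Matrix.mulVec]
    calc (bdryMatrix G)ᵀ a ⬝ᵥ v
        = ∑ x, (if x = a.1.2 then (Real.sqrt k)⁻¹ * v x else 0) := by
          refine Finset.sum_congr rfl fun x _ => ?_
          rw [Matrix.transpose_apply, bdryMatrix]
          by_cases h : x = a.1.2
          · rw [if_pos h, if_pos h, hreg x]
          · rw [if_neg h, if_neg h, zero_mul]
      _ = (Real.sqrt k)⁻¹ * v a.1.2 := by simp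
  have h2 : ((shiftMatrix G * (bdryMatrix G)ᵀ) *ᵥ v) a = (Real.sqrt k)⁻¹ * v a.1.1 := by
    rw [Matrix.mulVec]
    calc (shiftMatrix G * (bdryMatrix G)ᵀ) a ⬝ᵥ v
        = ∑ x, (if x = a.1.1 then (Real.sqrt k)⁻¹ * v x else 0) := by
          refine Finset.sum_congr rfl fun x _ => ?_
          rw [shift_bdryT_apply]
          by_cases h : x = a.1.1
          · rw [if_pos h, if_pos h, hreg x]
          · rw [if_neg h, if_neg h, zero_mul]
      _ = (Real.sqrt k)⁻¹ * v a.1.1 := by simp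
  rw [Pi.sub_apply, h1, h2, hcv a.1.1 a.1.2, sub_self]
  rfl

lemma hq_matrix (hreg : G.IsRegularOfDegree k) (hk : 0 < k)
    (hspec : {μ : ℝ | ∃ v : V → ℝ, v ≠ 0 ∧ (G.adjMatrix ℝ).mulVec v = μ • v}
      = {(k : ℝ), (k : ℝ) / 2, 0, -(k : ℝ) / 2}) :
    (((2:ℝ) * (k:ℝ)⁻¹) • G.adjMatrix ℝ) ^ 4 =
      (((2:ℝ) * (k:ℝ)⁻¹) • G.adjMatrix ℝ) ^ 3 * 2 + (((2:ℝ) * (k:ℝ)⁻¹) • G.adjMatrix ℝ) ^ 2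
        - (((2:ℝ) * (k:ℝ)⁻¹) • G.adjMatrix ℝ) * 2 := by
  have hk' : (k:ℝ) ≠ 0 := Nat.cast_ne_zero.mpr hk.ne'
  set A := G.adjMatrix ℝ with hAdef
  set X : Matrix V V ℝ := ((2:ℝ) * (k:ℝ)⁻¹) • A with hXdef
  have hA : A.IsHermitian := by
    rw [Matrix.IsHermitian, real_conjTranspose_eq_transpose, hAdef,
      SimpleGraph.transpose_adjMatrix]
  set Z : Matrix V V ℝ := X ^ 4 - (X ^ 3 * 2 + X ^ 2 - X * 2) with hZdef
  have hbasis : ∀ (μ : ℝ) (w : V → ℝ), w ≠ 0 → A *ᵥ w = μ • w → Z *ᵥ w = 0 := by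
    intro μ w hne hw
    have hmem : μ ∈ {μ : ℝ | ∃ v : V → ℝ, v ≠ 0 ∧ (G.adjMatrix ℝ).mulVec v = μ • v} :=
      ⟨w, hne, hw⟩
    rw [hspec] at hmem
    set ν : ℝ := (2:ℝ) * (k:ℝ)⁻¹ * μ with hνdef
    have hXv : X *ᵥ w = ν • w := by
      rw [hXdef, Matrix.smul_mulVec, hw, smul_smul]
    have hp : ∀ n : ℕ, X ^ n *ᵥ w = ν ^ n • w := by
      intro n
      induction n with
      | zero => simp
      | succ n ih =>
        rw [pow_succ', ← Matrix.mulVec_mulVec, ih, Matrix.mulVec_smul, hXv, smul_smul,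
          ← pow_succ]
    have hν : ν ^ 4 - (ν ^ 3 * 2 + ν ^ 2 - ν * 2) = 0 := by
      simp only [Set.mem_insert_iff, Set.mem_singleton_iff] at hmem
      rcases hmem with h | h | h | h <;> rw [hνdef, h] <;> field_simp <;> ring
    have expand : Z = X ^ 4 - (X ^ 3 + X ^ 3 + X ^ 2 - (X + X)) := by
      rw [hZdef]; noncomm_ring
    rw [expand]
    simp only [Matrix.sub_mulVec, Matrix.add_mulVec]
    rw [hp 4, hp 3, hp 2, hXv]
    have : ν ^ 4 • w - (ν ^ 3 • w + ν ^ 3 • w + ν ^ 2 • w - (ν • w + ν • w))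
        = (ν ^ 4 - (ν ^ 3 * 2 + ν ^ 2 - ν * 2)) • w := by module
    rw [this, hν, zero_smul]
  have key : Matrix.toEuclideanLin Z = 0 := by
    apply Module.Basis.ext hA.eigenvectorBasis.toBasis
    intro i
    have h0 : Z *ᵥ ⇑(hA.eigenvectorBasis i) = 0 :=
      hbasis (hA.eigenvalues i) _ (by simpa using hA.eigenvectorBasis.orthonormal.ne_zero i)
        (hA.mulVec_eigenvectorBasis i)
    simp only [OrthonormalBasis.coe_toBasis, LinearMap.zero_apply]
    rw [Matrix.toEuclideanLin_apply]
    have : (WithLp.equiv 2 (V → ℝ)) (hA.eigenvectorBasis i) = ⇑(hA.eigenvectorBasis i) := rfl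
    rw [h0]
    rfl
  have hZ0 : Z = 0 := by
    apply Matrix.toEuclideanLin.injective
    rw [key, map_zero]
  rw [hZdef] at hZ0
  exact sub_eq_zero.mp hZ0


lemma shiftT : (shiftMatrix G)ᵀ = shiftMatrix G := by
  ext a b
  simp only [Matrix.transpose_apply, shiftMatrix]
  have hiff : b.1 = (a.1.2, a.1.1) ↔ a.1 = (b.1.2, b.1.1) := by
    constructor <;> intro h
    · have h1 := congrArg Prod.fst h
      have h2 := congrArg Prod.snd h
      exact Prod.ext_iff.mpr ⟨h2.symm, h1.symm⟩
    · have h1 := congrArg Prod.fst h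
      have h2 := congrArg Prod.snd h
      exact Prod.ext_iff.mpr ⟨h2.symm, h1.symm⟩
  by_cases h : a.1 = (b.1.2, b.1.1)
  · rw [if_pos (hiff.mpr h), if_pos h]
  · rw [if_neg (fun hc => h (hiff.mp hc)), if_neg h]

lemma grover_eq : groverMatrix G = shiftMatrix G *
    ((bdryMatrix G)ᵀ * bdryMatrix G + (bdryMatrix G)ᵀ * bdryMatrix G - 1) := by
  rw [groverMatrix, two_smul]

lemma NN_eq (hreg : G.IsRegularOfDegree k) (hk : 0 < k) : ((bdryMatrix G)ᵀ * bdryMatrix G) * ((bdryMatrix G)ᵀ * bdryMatrix G)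
    = (bdryMatrix G)ᵀ * bdryMatrix G := by
  rw [Matrix.mul_assoc, ← Matrix.mul_assoc (bdryMatrix G) (bdryMatrix G)ᵀ (bdryMatrix G),
    bdry_mul_bdryT G hreg hk, Matrix.one_mul]

lemma grover_mul_E1 (hreg : G.IsRegularOfDegree k) (hk : 0 < k) : groverMatrix G * (bdryMatrix G)ᵀ
    = shiftMatrix G * (bdryMatrix G)ᵀ := by
  calc groverMatrix G * (bdryMatrix G)ᵀ
      = shiftMatrix G * (((bdryMatrix G)ᵀ * bdryMatrix G + (bdryMatrix G)ᵀ * bdryMatrix G - 1)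
          * (bdryMatrix G)ᵀ) := by rw [grover_eq, Matrix.mul_assoc]
    _ = shiftMatrix G * ((bdryMatrix G)ᵀ * (bdryMatrix G * (bdryMatrix G)ᵀ)
          + (bdryMatrix G)ᵀ * (bdryMatrix G * (bdryMatrix G)ᵀ) - (bdryMatrix G)ᵀ) := by
        rw [Matrix.sub_mul, Matrix.add_mul, Matrix.one_mul, Matrix.mul_assoc]
    _ = shiftMatrix G * (bdryMatrix G)ᵀ := by
        rw [bdry_mul_bdryT G hreg hk, Matrix.mul_one, add_sub_cancel_right]

lemma grover_mul_E2 (hreg : G.IsRegularOfDegree k) (hk : 0 < k) : groverMatrix G * (shiftMatrix G * (bdryMatrix G)ᵀ)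
    = (shiftMatrix G * (bdryMatrix G)ᵀ) * (((2:ℝ) * (k:ℝ)⁻¹) • G.adjMatrix ℝ)
      - (bdryMatrix G)ᵀ := by
  calc groverMatrix G * (shiftMatrix G * (bdryMatrix G)ᵀ)
      = shiftMatrix G * (((bdryMatrix G)ᵀ * bdryMatrix G + (bdryMatrix G)ᵀ * bdryMatrix G - 1)
          * (shiftMatrix G * (bdryMatrix G)ᵀ)) := by rw [grover_eq, Matrix.mul_assoc]
    _ = shiftMatrix G * ((bdryMatrix G)ᵀ * (bdryMatrix G * (shiftMatrix G * (bdryMatrix G)ᵀ))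
          + (bdryMatrix G)ᵀ * (bdryMatrix G * (shiftMatrix G * (bdryMatrix G)ᵀ))
          - shiftMatrix G * (bdryMatrix G)ᵀ) := by
        rw [Matrix.sub_mul, Matrix.add_mul, Matrix.one_mul, Matrix.mul_assoc]
    _ = shiftMatrix G * ((k:ℝ)⁻¹ • ((bdryMatrix G)ᵀ * G.adjMatrix ℝ)
          + (k:ℝ)⁻¹ • ((bdryMatrix G)ᵀ * G.adjMatrix ℝ) - shiftMatrix G * (bdryMatrix G)ᵀ) := by
        rw [disc_eq G hreg hk, Matrix.mul_smul]
    _ = (k:ℝ)⁻¹ • (shiftMatrix G * ((bdryMatrix G)ᵀ * G.adjMatrix ℝ))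
          + (k:ℝ)⁻¹ • (shiftMatrix G * ((bdryMatrix G)ᵀ * G.adjMatrix ℝ))
          - shiftMatrix G * (shiftMatrix G * (bdryMatrix G)ᵀ) := by
        rw [Matrix.mul_sub, Matrix.mul_add, Matrix.mul_smul]
    _ = (k:ℝ)⁻¹ • ((shiftMatrix G * (bdryMatrix G)ᵀ) * G.adjMatrix ℝ)
          + (k:ℝ)⁻¹ • ((shiftMatrix G * (bdryMatrix G)ᵀ) * G.adjMatrix ℝ)
          - (bdryMatrix G)ᵀ := by
        rw [← Matrix.mul_assoc (shiftMatrix G) (bdryMatrix G)ᵀ (G.adjMatrix ℝ),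
          ← Matrix.mul_assoc (shiftMatrix G) (shiftMatrix G) (bdryMatrix G)ᵀ,
          shift_mul_shift, Matrix.one_mul]
    _ = (shiftMatrix G * (bdryMatrix G)ᵀ) * (((2:ℝ) * (k:ℝ)⁻¹) • G.adjMatrix ℝ)
          - (bdryMatrix G)ᵀ := by
        rw [Matrix.mul_smul, show (2:ℝ) * (k:ℝ)⁻¹ = (k:ℝ)⁻¹ + (k:ℝ)⁻¹ from by ring, add_smul]

lemma grover_sq_sub_one (hreg : G.IsRegularOfDegree k) (hk : 0 < k) : groverMatrix G * groverMatrix G - 1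
    = (shiftMatrix G * (bdryMatrix G)ᵀ)
        * (bdryMatrix G * (shiftMatrix G * ((bdryMatrix G)ᵀ * bdryMatrix G
            + (bdryMatrix G)ᵀ * bdryMatrix G - 1)))
      + (shiftMatrix G * (bdryMatrix G)ᵀ)
        * (bdryMatrix G * (shiftMatrix G * ((bdryMatrix G)ᵀ * bdryMatrix G
            + (bdryMatrix G)ᵀ * bdryMatrix G - 1)))
      - (bdryMatrix G)ᵀ * bdryMatrix G - (bdryMatrix G)ᵀ * bdryMatrix G := by
  have hU2 : groverMatrix G * groverMatrix G
      = (shiftMatrix G * (bdryMatrix G)ᵀ)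
          * (bdryMatrix G * (shiftMatrix G * ((bdryMatrix G)ᵀ * bdryMatrix G
              + (bdryMatrix G)ᵀ * bdryMatrix G - 1)))
        + (shiftMatrix G * (bdryMatrix G)ᵀ)
          * (bdryMatrix G * (shiftMatrix G * ((bdryMatrix G)ᵀ * bdryMatrix G
              + (bdryMatrix G)ᵀ * bdryMatrix G - 1)))
        - ((bdryMatrix G)ᵀ * bdryMatrix G + (bdryMatrix G)ᵀ * bdryMatrix G - 1) := by
    calc groverMatrix G * groverMatrix G
        = shiftMatrix G * (((bdryMatrix G)ᵀ * bdryMatrix G + (bdryMatrix G)ᵀ * bdryMatrix G - 1)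
            * (shiftMatrix G * ((bdryMatrix G)ᵀ * bdryMatrix G
              + (bdryMatrix G)ᵀ * bdryMatrix G - 1))) := by
          rw [grover_eq, Matrix.mul_assoc]
      _ = shiftMatrix G * ((bdryMatrix G)ᵀ * (bdryMatrix G * (shiftMatrix G
            * ((bdryMatrix G)ᵀ * bdryMatrix G + (bdryMatrix G)ᵀ * bdryMatrix G - 1)))
          + (bdryMatrix G)ᵀ * (bdryMatrix G * (shiftMatrix G
            * ((bdryMatrix G)ᵀ * bdryMatrix G + (bdryMatrix G)ᵀ * bdryMatrix G - 1)))
          - shiftMatrix G * ((bdryMatrix G)ᵀ * bdryMatrix G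
              + (bdryMatrix G)ᵀ * bdryMatrix G - 1)) := by
          rw [Matrix.sub_mul, Matrix.add_mul, Matrix.one_mul, Matrix.mul_assoc]
      _ = shiftMatrix G * ((bdryMatrix G)ᵀ * (bdryMatrix G * (shiftMatrix G
            * ((bdryMatrix G)ᵀ * bdryMatrix G + (bdryMatrix G)ᵀ * bdryMatrix G - 1))))
          + shiftMatrix G * ((bdryMatrix G)ᵀ * (bdryMatrix G * (shiftMatrix G
            * ((bdryMatrix G)ᵀ * bdryMatrix G + (bdryMatrix G)ᵀ * bdryMatrix G - 1))))
          - shiftMatrix G * (shiftMatrix G * ((bdryMatrix G)ᵀ * bdryMatrix G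
              + (bdryMatrix G)ᵀ * bdryMatrix G - 1)) := by
          rw [Matrix.mul_sub, Matrix.mul_add]
      _ = (shiftMatrix G * (bdryMatrix G)ᵀ)
            * (bdryMatrix G * (shiftMatrix G * ((bdryMatrix G)ᵀ * bdryMatrix G
                + (bdryMatrix G)ᵀ * bdryMatrix G - 1)))
          + (shiftMatrix G * (bdryMatrix G)ᵀ)
            * (bdryMatrix G * (shiftMatrix G * ((bdryMatrix G)ᵀ * bdryMatrix G
                + (bdryMatrix G)ᵀ * bdryMatrix G - 1)))
          - ((bdryMatrix G)ᵀ * bdryMatrix G + (bdryMatrix G)ᵀ * bdryMatrix G - 1) := by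
          rw [← Matrix.mul_assoc (shiftMatrix G) (bdryMatrix G)ᵀ,
            ← Matrix.mul_assoc (shiftMatrix G) (shiftMatrix G), shift_mul_shift, Matrix.one_mul]
  rw [hU2]
  abel

lemma grover_orth1 (hreg : G.IsRegularOfDegree k) (hk : 0 < k) : groverMatrix G * (groverMatrix G)ᵀ = 1 := by
  have hSS : ((bdryMatrix G)ᵀ * bdryMatrix G + (bdryMatrix G)ᵀ * bdryMatrix G - 1)
      * ((bdryMatrix G)ᵀ * bdryMatrix G + (bdryMatrix G)ᵀ * bdryMatrix G - 1) = 1 := by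
    have expand : ∀ N : Matrix (arcSet G) (arcSet G) ℝ, (N + N - 1) * (N + N - 1)
        = N * N + N * N + N * N + N * N - (N + N + N + N) + 1 := by
      intro N; noncomm_ring
    rw [expand, NN_eq G hreg hk]
    abel
  have hST : ((bdryMatrix G)ᵀ * bdryMatrix G + (bdryMatrix G)ᵀ * bdryMatrix G - 1)ᵀ
      = (bdryMatrix G)ᵀ * bdryMatrix G + (bdryMatrix G)ᵀ * bdryMatrix G - 1 := by
    rw [Matrix.transpose_sub, Matrix.transpose_add, Matrix.transpose_one, Matrix.transpose_mul,
      Matrix.transpose_transpose]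
  have hUT : (groverMatrix G)ᵀ
      = ((bdryMatrix G)ᵀ * bdryMatrix G + (bdryMatrix G)ᵀ * bdryMatrix G - 1)
          * shiftMatrix G := by
    rw [grover_eq, Matrix.transpose_mul, hST, shiftT]
  rw [hUT, grover_eq, Matrix.mul_assoc,
    ← Matrix.mul_assoc ((bdryMatrix G)ᵀ * bdryMatrix G + (bdryMatrix G)ᵀ * bdryMatrix G - 1)
      ((bdryMatrix G)ᵀ * bdryMatrix G + (bdryMatrix G)ᵀ * bdryMatrix G - 1) (shiftMatrix G),
    hSS, Matrix.one_mul, shift_mul_shift]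

lemma grover_orth2 (hreg : G.IsRegularOfDegree k) (hk : 0 < k) : (groverMatrix G)ᵀ * groverMatrix G = 1 := by
  have hSS : ((bdryMatrix G)ᵀ * bdryMatrix G + (bdryMatrix G)ᵀ * bdryMatrix G - 1)
      * ((bdryMatrix G)ᵀ * bdryMatrix G + (bdryMatrix G)ᵀ * bdryMatrix G - 1) = 1 := by
    have expand : ∀ N : Matrix (arcSet G) (arcSet G) ℝ, (N + N - 1) * (N + N - 1)
        = N * N + N * N + N * N + N * N - (N + N + N + N) + 1 := by
      intro N; noncomm_ring
    rw [expand, NN_eq G hreg hk]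
    abel
  have hST : ((bdryMatrix G)ᵀ * bdryMatrix G + (bdryMatrix G)ᵀ * bdryMatrix G - 1)ᵀ
      = (bdryMatrix G)ᵀ * bdryMatrix G + (bdryMatrix G)ᵀ * bdryMatrix G - 1 := by
    rw [Matrix.transpose_sub, Matrix.transpose_add, Matrix.transpose_one, Matrix.transpose_mul,
      Matrix.transpose_transpose]
  have hUT : (groverMatrix G)ᵀ
      = ((bdryMatrix G)ᵀ * bdryMatrix G + (bdryMatrix G)ᵀ * bdryMatrix G - 1)
          * shiftMatrix G := by
    rw [grover_eq, Matrix.transpose_mul, hST, shiftT]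
  rw [hUT, grover_eq, Matrix.mul_assoc,
    ← Matrix.mul_assoc (shiftMatrix G) (shiftMatrix G), shift_mul_shift, Matrix.one_mul, hSS]

end Graph

open Matrix in
/-- A connected `k`-regular graph whose distinct adjacency eigenvalues are exactly
`{k, k/2, 0, -k/2}` has Grover walk evolution satisfying `U¹² = I`. -/
theorem stmt_19 {V : Type*} [Fintype V] [DecidableEq V] (G : SimpleGraph V)
    [DecidableRel G.Adj] (k : ℕ)
    (hreg : G.IsRegularOfDegree k) (hconn : G.Connected)
    (hspec : {μ : ℝ | ∃ v : V → ℝ, v ≠ 0 ∧ (G.adjMatrix ℝ).mulVec v = μ • v}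
      = {(k : ℝ), (k : ℝ) / 2, 0, -(k : ℝ) / 2}) :
    groverMatrix G ^ 12 = 1 := by
  by_cases hE : IsEmpty (arcSet G)
  · ext a b
    exact hE.elim a
  · have hne : Nonempty (arcSet G) := not_isEmpty_iff.mp hE
    obtain ⟨a₀⟩ := hne
    have hk : 0 < k := by
      rw [← hreg a₀.1.1, SimpleGraph.degree_pos_iff_exists_adj]
      exact ⟨a₀.1.2, a₀.2⟩
    have hk' : (k:ℝ) ≠ 0 := Nat.cast_ne_zero.mpr hk.ne'
    -- notation
    set U := groverMatrix G with hUdef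
    set E₁ := (bdryMatrix G)ᵀ with hE₁def
    set E₂ := shiftMatrix G * (bdryMatrix G)ᵀ with hE₂def
    set X := ((2:ℝ) * (k:ℝ)⁻¹) • G.adjMatrix ℝ with hXdef
    -- hypotheses of the core lemma
    have h1 : U * E₁ = E₂ := grover_mul_E1 G hreg hk
    have h2 : U * E₂ = E₂ * X - E₁ := grover_mul_E2 G hreg hk
    have hq : X ^ 4 = X ^ 3 * 2 + X ^ 2 - X * 2 := hq_matrix G hreg hk hspec
    have hr : (E₂ - E₁) * (X ^ 3 - X) = 0 := by
      apply matrix_eq_zero_of_mulVec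
      intro w
      rw [← Matrix.mulVec_mulVec]
      have hcomm : X * (X ^ 3 - X) = (X ^ 3 - X) * 2 := by
        have e1 : X * (X ^ 3 - X) = X ^ 4 - X ^ 2 := by noncomm_ring
        rw [e1, hq]
        noncomm_ring
      set vv := (X ^ 3 - X) *ᵥ w with hvvdef
      have hXvv : X *ᵥ vv = vv + vv := by
        calc X *ᵥ vv = (X * (X ^ 3 - X)) *ᵥ w := by rw [hvvdef, Matrix.mulVec_mulVec]
          _ = ((X ^ 3 - X) + (X ^ 3 - X)) *ᵥ w := by rw [hcomm, mul_two]
          _ = vv + vv := by rw [Matrix.add_mulVec]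
      have hAvv : G.adjMatrix ℝ *ᵥ vv = (k:ℝ) • vv := by
        have h3 : ((2:ℝ) * (k:ℝ)⁻¹) • (G.adjMatrix ℝ *ᵥ vv) = vv + vv := by
          rw [← Matrix.smul_mulVec, ← hXdef, hXvv]
        have h4 := congrArg (fun z => ((k:ℝ) / 2) • z) h3
        simp only [smul_smul] at h4
        rw [show (k:ℝ) / 2 * ((2:ℝ) * (k:ℝ)⁻¹) = 1 from by field_simp, one_smul] at h4
        rw [h4, smul_add, ← add_smul, show (k:ℝ)/2 + (k:ℝ)/2 = (k:ℝ) from by ring]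
      exact Ediff_mulVec_const G hreg (eigen_const G hconn hreg hAvv)
    obtain ⟨key1, key2⟩ := core12 U E₁ E₂ X h1 h2 hq hr
    -- the transported walk operator is orthogonal
    have hUUT : U * Uᵀ = 1 := grover_orth1 G hreg hk
    have hUTU : Uᵀ * U = 1 := grover_orth2 G hreg hk
    have hUn : ∀ n : ℕ, U ^ n * (Uᵀ) ^ n = 1 := by
      intro n
      induction n with
      | zero => simp
      | succ n ih =>
        rw [pow_succ', pow_succ, Matrix.mul_assoc,
          ← Matrix.mul_assoc (U ^ n) ((Uᵀ) ^ n) Uᵀ, ih, Matrix.one_mul, hUUT]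
    have hUn' : ∀ n : ℕ, (Uᵀ) ^ n * U ^ n = 1 := by
      intro n
      induction n with
      | zero => simp
      | succ n ih =>
        rw [pow_succ', pow_succ, Matrix.mul_assoc,
          ← Matrix.mul_assoc ((Uᵀ) ^ n) (U ^ n) U, ih, Matrix.one_mul, hUTU]
    -- T = U^12 - 1
    set T := U ^ 12 - 1 with hTdef
    have hT1 : T * E₁ = 0 := by rw [hTdef, Matrix.sub_mul, key1, Matrix.one_mul, sub_self]
    have hT2 : T * E₂ = 0 := by rw [hTdef, Matrix.sub_mul, key2, Matrix.one_mul, sub_self]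
    have hTU2 : T * (U * U - 1) = 0 := by
      rw [hUdef, grover_sq_sub_one G hreg hk, ← hE₂def, ← hE₁def]
      rw [Matrix.mul_sub, Matrix.mul_sub, Matrix.mul_add,
        ← Matrix.mul_assoc T E₂ _, hT2, ← Matrix.mul_assoc T E₁ _, hT1]
      simp
    have hTsq : T * T = 0 := by
      have hfactor : U ^ 12 - 1
          = (U * U - 1) * (U ^ 10 + U ^ 8 + U ^ 6 + U ^ 4 + U ^ 2 + 1) := by
        noncomm_ring
      calc T * T
          = T * ((U * U - 1) * (U ^ 10 + U ^ 8 + U ^ 6 + U ^ 4 + U ^ 2 + 1)) := by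
            rw [← hfactor, ← hTdef]
        _ = (T * (U * U - 1)) * (U ^ 10 + U ^ 8 + U ^ 6 + U ^ 4 + U ^ 2 + 1) := by
            rw [Matrix.mul_assoc]
        _ = 0 := by rw [hTU2, Matrix.zero_mul]
    have hTt : Tᵀ = (Uᵀ) ^ 12 - 1 := by
      rw [hTdef, Matrix.transpose_sub, Matrix.transpose_pow, Matrix.transpose_one]
    have hnormal : T * Tᵀ = Tᵀ * T := by
      have e1 : T * Tᵀ = U ^ 12 * (Uᵀ) ^ 12 - U ^ 12 - (Uᵀ) ^ 12 + 1 := by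
        rw [hTdef, hTt]; noncomm_ring
      have e2 : Tᵀ * T = (Uᵀ) ^ 12 * U ^ 12 - (Uᵀ) ^ 12 - U ^ 12 + 1 := by
        rw [hTdef, hTt]; noncomm_ring
      rw [e1, e2, hUn 12, hUn' 12]
      abel
    have hTtT2 : (Tᵀ * T) * (Tᵀ * T) = 0 := by
      calc (Tᵀ * T) * (Tᵀ * T) = Tᵀ * ((T * Tᵀ) * T) := by
            rw [Matrix.mul_assoc, Matrix.mul_assoc]
        _ = Tᵀ * ((Tᵀ * T) * T) := by rw [hnormal]
        _ = Tᵀ * (Tᵀ * (T * T)) := by rw [Matrix.mul_assoc]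
        _ = 0 := by rw [hTsq, Matrix.mul_zero, Matrix.mul_zero]
    have hTtT : Tᵀ * T = 0 := by
      have h5 : (Tᵀ * T)ᴴ * (Tᵀ * T) = 0 := by
        rw [real_conjTranspose_eq_transpose, Matrix.transpose_mul, Matrix.transpose_transpose]
        exact hTtT2
      exact Matrix.conjTranspose_mul_self_eq_zero.mp h5
    have hT0 : T = 0 := by
      have h6 : Tᴴ * T = 0 := by rw [real_conjTranspose_eq_transpose, hTtT]
      exact Matrix.conjTranspose_mul_self_eq_zero.mp h6
    rw [hTdef] at hT0
    exact sub_eq_zero.mp hT0
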